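/- Let 𝔥 = 𝔥(m,ρ,s) be a smooth Hamiltonian density and suppose smooth fields (m,ρ,s) on a bounded domain Ω satisfy the open Lie-Poisson system: ∂_t m + £_{∂𝔥/∂m} m + ρ∇(∂𝔥/∂ρ) + s∇(∂𝔥/∂s) = b on Ω, ∂_t ρ + div(ρ ∂𝔥/∂m) = θ_ρ, ∂_t s + div(s ∂𝔥/∂m) = θ_s on Ω, with boundary conditions ((∂𝔥/∂m)·n) m = −J, ρ(∂𝔥/∂m)·n = −j_ρ, s(∂𝔥/∂m)·n = −j_s on ∂Ω. Then the total Hamiltonian h = ∫_Ω 𝔥(m,ρ,s) dx satisfies d/dt h = ∫_Ω ( b·∂𝔥/∂m + θ_ρ ∂𝔥/∂ρ + θ_s ∂𝔥/∂s ) dx + ∫_{∂Ω} ( J·∂𝔥/∂m + j_ρ ∂𝔥/∂ρ + j_s ∂𝔥/∂s ) da. -/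

import Mathlib

open scoped BigOperators
open MeasureTheory

noncomputable def pd {n : ℕ} (i : Fin n) (f : (Fin n → ℝ) → ℝ) (x : Fin n → ℝ) : ℝ :=
  fderiv ℝ f x (Pi.single i 1)

/-- `(∂𝔥/∂m)_i` of a Hamiltonian density `𝔥(m,ρ,s)` at `(mv, r, sv)`. -/
noncomputable def Dhm {n : ℕ} (H : (Fin n → ℝ) → ℝ → ℝ → ℝ)
    (mv : Fin n → ℝ) (r sv : ℝ) (i : Fin n) : ℝ :=
  fderiv ℝ (fun w => H w r sv) mv (Pi.single i 1)

/-- `∂𝔥/∂ρ` at `(mv, r, sv)`. -/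
noncomputable def Dhρ {n : ℕ} (H : (Fin n → ℝ) → ℝ → ℝ → ℝ)
    (mv : Fin n → ℝ) (r sv : ℝ) : ℝ :=
  deriv (fun r' => H mv r' sv) r

/-- `∂𝔥/∂s` at `(mv, r, sv)`. -/
noncomputable def Dhs {n : ℕ} (H : (Fin n → ℝ) → ℝ → ℝ → ℝ)
    (mv : Fin n → ℝ) (r sv : ℝ) : ℝ :=
  deriv (fun t => H mv r t) sv

section Aux
variable {n : ℕ} {H : (Fin n → ℝ) → ℝ → ℝ → ℝ}

theorem Dhm_eq (hH : ContDiff ℝ 2 (fun p : (Fin n → ℝ) × ℝ × ℝ => H p.1 p.2.1 p.2.2))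
    (mv : Fin n → ℝ) (r sv : ℝ) (i : Fin n) :
    Dhm H mv r sv i
      = fderiv ℝ (fun p : (Fin n → ℝ) × ℝ × ℝ => H p.1 p.2.1 p.2.2) (mv, r, sv)
          ((Pi.single i 1 : Fin n → ℝ), 0, 0) := by
  have hincl : HasFDerivAt (fun w : Fin n → ℝ => (w, r, sv))
      ((ContinuousLinearMap.id ℝ (Fin n → ℝ)).prod 0) mv :=
    (hasFDerivAt_id mv).prodMk (hasFDerivAt_const (r, sv) mv)
  have hHF : HasFDerivAt (fun p : (Fin n → ℝ) × ℝ × ℝ => H p.1 p.2.1 p.2.2)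
      (fderiv ℝ (fun p : (Fin n → ℝ) × ℝ × ℝ => H p.1 p.2.1 p.2.2) (mv, r, sv)) (mv, r, sv) :=
    (hH.differentiable two_ne_zero (mv, r, sv)).hasFDerivAt
  have hcomp := hHF.comp mv hincl
  have h2 : fderiv ℝ (fun w => H w r sv) mv
      = (fderiv ℝ (fun p : (Fin n → ℝ) × ℝ × ℝ => H p.1 p.2.1 p.2.2) (mv, r, sv)).comp
          ((ContinuousLinearMap.id ℝ (Fin n → ℝ)).prod 0) := hcomp.fderiv
  rw [Dhm, h2]
  rfl

theorem Dhρ_eq (hH : ContDiff ℝ 2 (fun p : (Fin n → ℝ) × ℝ × ℝ => H p.1 p.2.1 p.2.2))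
    (mv : Fin n → ℝ) (r sv : ℝ) :
    Dhρ H mv r sv
      = fderiv ℝ (fun p : (Fin n → ℝ) × ℝ × ℝ => H p.1 p.2.1 p.2.2) (mv, r, sv)
          ((0 : Fin n → ℝ), 1, 0) := by
  have hincl : HasDerivAt (fun r' : ℝ => ((mv, r', sv) : (Fin n → ℝ) × ℝ × ℝ))
      (((0 : Fin n → ℝ), 1, 0)) r :=
    (hasDerivAt_const r mv).prodMk ((hasDerivAt_id r).prodMk (hasDerivAt_const r sv))
  have hHF : HasFDerivAt (fun p : (Fin n → ℝ) × ℝ × ℝ => H p.1 p.2.1 p.2.2)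
      (fderiv ℝ (fun p : (Fin n → ℝ) × ℝ × ℝ => H p.1 p.2.1 p.2.2) (mv, r, sv)) (mv, r, sv) :=
    (hH.differentiable two_ne_zero (mv, r, sv)).hasFDerivAt
  exact (hHF.comp_hasDerivAt r hincl).deriv

theorem Dhs_eq (hH : ContDiff ℝ 2 (fun p : (Fin n → ℝ) × ℝ × ℝ => H p.1 p.2.1 p.2.2))
    (mv : Fin n → ℝ) (r sv : ℝ) :
    Dhs H mv r sv
      = fderiv ℝ (fun p : (Fin n → ℝ) × ℝ × ℝ => H p.1 p.2.1 p.2.2) (mv, r, sv)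
          ((0 : Fin n → ℝ), 0, 1) := by
  have hincl : HasDerivAt (fun u : ℝ => ((mv, r, u) : (Fin n → ℝ) × ℝ × ℝ))
      (((0 : Fin n → ℝ), 0, 1)) sv :=
    (hasDerivAt_const sv mv).prodMk ((hasDerivAt_const sv r).prodMk (hasDerivAt_id sv))
  have hHF : HasFDerivAt (fun p : (Fin n → ℝ) × ℝ × ℝ => H p.1 p.2.1 p.2.2)
      (fderiv ℝ (fun p : (Fin n → ℝ) × ℝ × ℝ => H p.1 p.2.1 p.2.2) (mv, r, sv)) (mv, r, sv) :=
    (hH.differentiable two_ne_zero (mv, r, sv)).hasFDerivAt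
  exact (hHF.comp_hasDerivAt sv hincl).deriv

theorem pd_mul {f g : (Fin n → ℝ) → ℝ} {x} (hf : DifferentiableAt ℝ f x)
    (hg : DifferentiableAt ℝ g x) (i : Fin n) :
    pd i (fun y => f y * g y) x = pd i f x * g x + f x * pd i g x := by
  unfold pd
  rw [fderiv_fun_mul hf hg]
  simp [mul_comm, add_comm]

theorem pd_sum {k : ℕ} {f : Fin k → (Fin n → ℝ) → ℝ} {x}
    (hf : ∀ j, DifferentiableAt ℝ (f j) x) (i : Fin n) :
    pd i (fun y => ∑ j, f j y) x = ∑ j, pd i (f j) x := by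
  unfold pd
  rw [fderiv_fun_sum (fun j _ => hf j)]
  simp

theorem pd_add {f g : (Fin n → ℝ) → ℝ} {x} (hf : DifferentiableAt ℝ f x)
    (hg : DifferentiableAt ℝ g x) (i : Fin n) :
    pd i (fun y => f y + g y) x = pd i f x + pd i g x := by
  unfold pd; rw [fderiv_fun_add hf hg]; simp

theorem clm_decomp (L : ((Fin n → ℝ) × ℝ × ℝ) →L[ℝ] ℝ) (v : Fin n → ℝ) (a c : ℝ) :
    L (v, a, c) = (∑ i, v i * L ((Pi.single i 1 : Fin n → ℝ), 0, 0))
      + a * L ((0 : Fin n → ℝ), 1, 0) + c * L ((0 : Fin n → ℝ), 0, 1) := by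
  have hv : ((v, a, c) : (Fin n → ℝ) × ℝ × ℝ)
      = (∑ i, v i • (((Pi.single i 1 : Fin n → ℝ), 0, 0) : (Fin n → ℝ) × ℝ × ℝ))
        + a • (((0 : Fin n → ℝ), 1, 0) : (Fin n → ℝ) × ℝ × ℝ)
        + c • (((0 : Fin n → ℝ), 0, 1) : (Fin n → ℝ) × ℝ × ℝ) := by
    refine Prod.ext ?_ (Prod.ext ?_ ?_) <;>
      simp [Prod.fst_sum, Prod.snd_sum]
    ext j; simp [Pi.single_apply]
  rw [hv]
  simp only [map_add, map_sum, L.map_smul, smul_eq_mul]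

theorem key_id (M DM bb pdR pdDR pdS pdDS : Fin n → ℝ) (P Q : Fin n → Fin n → ℝ)
    (R S DR DS tr ts : ℝ) :
    (∑ i, (bb i - (∑ c, DM c * P c i) - (∑ c, M c * Q i c) - M i * (∑ c, Q c c)
        - R * pdDR i - S * pdDS i) * DM i)
      + (tr - ∑ c, (pdR c * DM c + R * Q c c)) * DR
      + (ts - ∑ c, (pdS c * DM c + S * Q c c)) * DS
      + (∑ c, ((∑ i, (P c i * DM i + M i * Q c i)) + (pdR c * DR + R * pdDR c)
          + (pdS c * DS + S * pdDS c)) * DM c)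
      + ((∑ i, M i * DM i) + R * DR + S * DS) * (∑ c, Q c c)
    = (∑ i, bb i * DM i) + tr * DR + ts * DS := by
  simp only [sub_mul, add_mul, Finset.sum_add_distrib, Finset.sum_sub_distrib,
    Finset.sum_mul, Finset.mul_sum]
  ring_nf
  rw [Finset.sum_comm (f := fun i c => DM c * P c i * DM i),
    Finset.sum_comm (f := fun x x_1 => M x * Q x_1 x_1 * DM x)]
  ring_nf
  have h1 : ∑ y : Fin n, ∑ x : Fin n, DM y * P y x * DM x
      = ∑ x : Fin n, ∑ i : Fin n, P x i * DM i * DM x :=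
    Finset.sum_congr rfl fun _ _ => Finset.sum_congr rfl fun _ _ => by ring
  have h2 : ∑ x : Fin n, ∑ x_1 : Fin n, M x_1 * Q x x * DM x_1
      = ∑ x : Fin n, ∑ i : Fin n, M i * DM i * Q x x :=
    Finset.sum_congr rfl fun _ _ => Finset.sum_congr rfl fun _ _ => by ring
  have h3 : ∑ i : Fin n, pdR i * DM i * DR = ∑ x : Fin n, pdR x * DR * DM x :=
    Finset.sum_congr rfl fun _ _ => by ring
  have h4 : ∑ i : Fin n, R * Q i i * DR = ∑ x : Fin n, DR * R * Q x x :=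
    Finset.sum_congr rfl fun _ _ => by ring
  have h5 : ∑ i : Fin n, pdS i * DM i * DS = ∑ x : Fin n, pdS x * DS * DM x :=
    Finset.sum_congr rfl fun _ _ => by ring
  have h6 : ∑ i : Fin n, S * Q i i * DS = ∑ x : Fin n, DS * S * Q x x :=
    Finset.sum_congr rfl fun _ _ => by ring
  have h7 : ∑ x : Fin n, ∑ x_1 : Fin n, Q x x * M x_1 * DM x_1
      = ∑ x : Fin n, ∑ x_1 : Fin n, M x_1 * Q x x * DM x_1 :=
    Finset.sum_congr rfl fun _ _ => Finset.sum_congr rfl fun _ _ => by ring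
  rw [h7]
  ring

/-- `ContDiff` of `Dhm` composed with `C¹` fields. -/
theorem contDiff_Dhm_comp (hH : ContDiff ℝ 2 (fun p : (Fin n → ℝ) × ℝ × ℝ => H p.1 p.2.1 p.2.2))
    {E' : Type*} [NormedAddCommGroup E'] [NormedSpace ℝ E']
    {u : E' → (Fin n → ℝ)} {v w : E' → ℝ}
    (hu : ContDiff ℝ 1 u) (hv : ContDiff ℝ 1 v) (hw : ContDiff ℝ 1 w) (j : Fin n) :
    ContDiff ℝ 1 (fun e => Dhm H (u e) (v e) (w e) j) := by
  have heq : (fun e => Dhm H (u e) (v e) (w e) j)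
      = fun e => (fderiv ℝ (fun p : (Fin n → ℝ) × ℝ × ℝ => H p.1 p.2.1 p.2.2) (u e, v e, w e))
          ((Pi.single j 1 : Fin n → ℝ), 0, 0) :=
    funext fun e => Dhm_eq hH (u e) (v e) (w e) j
  rw [heq]
  exact ((hH.fderiv_right (le_refl _)).comp (hu.prodMk (hv.prodMk hw))).clm_apply contDiff_const

theorem contDiff_Dhρ_comp (hH : ContDiff ℝ 2 (fun p : (Fin n → ℝ) × ℝ × ℝ => H p.1 p.2.1 p.2.2))
    {E' : Type*} [NormedAddCommGroup E'] [NormedSpace ℝ E']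
    {u : E' → (Fin n → ℝ)} {v w : E' → ℝ}
    (hu : ContDiff ℝ 1 u) (hv : ContDiff ℝ 1 v) (hw : ContDiff ℝ 1 w) :
    ContDiff ℝ 1 (fun e => Dhρ H (u e) (v e) (w e)) := by
  have heq : (fun e => Dhρ H (u e) (v e) (w e))
      = fun e => (fderiv ℝ (fun p : (Fin n → ℝ) × ℝ × ℝ => H p.1 p.2.1 p.2.2) (u e, v e, w e))
          ((0 : Fin n → ℝ), 1, 0) :=
    funext fun e => Dhρ_eq hH (u e) (v e) (w e)
  rw [heq]
  exact ((hH.fderiv_right (le_refl _)).comp (hu.prodMk (hv.prodMk hw))).clm_apply contDiff_const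

theorem contDiff_Dhs_comp (hH : ContDiff ℝ 2 (fun p : (Fin n → ℝ) × ℝ × ℝ => H p.1 p.2.1 p.2.2))
    {E' : Type*} [NormedAddCommGroup E'] [NormedSpace ℝ E']
    {u : E' → (Fin n → ℝ)} {v w : E' → ℝ}
    (hu : ContDiff ℝ 1 u) (hv : ContDiff ℝ 1 v) (hw : ContDiff ℝ 1 w) :
    ContDiff ℝ 1 (fun e => Dhs H (u e) (v e) (w e)) := by
  have heq : (fun e => Dhs H (u e) (v e) (w e))
      = fun e => (fderiv ℝ (fun p : (Fin n → ℝ) × ℝ × ℝ => H p.1 p.2.1 p.2.2) (u e, v e, w e))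
          ((0 : Fin n → ℝ), 0, 1) :=
    funext fun e => Dhs_eq hH (u e) (v e) (w e)
  rw [heq]
  exact ((hH.fderiv_right (le_refl _)).comp (hu.prodMk (hv.prodMk hw))).clm_apply contDiff_const

end Aux

section T
variable {n : ℕ} {H : (Fin n → ℝ) → ℝ → ℝ → ℝ}
  {m : ℝ → (Fin n → ℝ) → (Fin n → ℝ)} {ρ s : ℝ → (Fin n → ℝ) → ℝ}

/-- time derivative decomposition -/
theorem hasDerivAt_H_time
    (hH : ContDiff ℝ 2 (fun p : (Fin n → ℝ) × ℝ × ℝ => H p.1 p.2.1 p.2.2))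
    (hm : ∀ i, ContDiff ℝ 1 (fun p : ℝ × (Fin n → ℝ) => m p.1 p.2 i))
    (hρ : ContDiff ℝ 1 (fun p : ℝ × (Fin n → ℝ) => ρ p.1 p.2))
    (hs : ContDiff ℝ 1 (fun p : ℝ × (Fin n → ℝ) => s p.1 p.2))
    (t : ℝ) (x : Fin n → ℝ) :
    HasDerivAt (fun τ => H (m τ x) (ρ τ x) (s τ x))
      ((∑ i, deriv (fun τ => m τ x i) t
          * (fderiv ℝ (fun p : (Fin n → ℝ) × ℝ × ℝ => H p.1 p.2.1 p.2.2) (m t x, ρ t x, s t x))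
              ((Pi.single i 1 : Fin n → ℝ), 0, 0))
        + deriv (fun τ => ρ τ x) t
          * (fderiv ℝ (fun p : (Fin n → ℝ) × ℝ × ℝ => H p.1 p.2.1 p.2.2) (m t x, ρ t x, s t x))
              ((0 : Fin n → ℝ), 1, 0)
        + deriv (fun τ => s τ x) t
          * (fderiv ℝ (fun p : (Fin n → ℝ) × ℝ × ℝ => H p.1 p.2.1 p.2.2) (m t x, ρ t x, s t x))
              ((0 : Fin n → ℝ), 0, 1)) t := by
  have hcurve : ∀ (f : ℝ × (Fin n → ℝ) → ℝ), ContDiff ℝ 1 f →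
      HasDerivAt (fun τ => f (τ, x)) (deriv (fun τ => f (τ, x)) t) t := by
    intro f hf
    have : DifferentiableAt ℝ (fun τ => f (τ, x)) t :=
      ((hf.differentiable one_ne_zero) (t, x)).comp t
        ((differentiableAt_id.prodMk (differentiableAt_const x)))
    exact this.hasDerivAt
  have hmv : HasDerivAt (fun τ => m τ x) (fun i => deriv (fun τ => m τ x i) t) t := by
    apply hasDerivAt_pi.mpr
    intro i
    exact hcurve _ (hm i)
  have hρv := hcurve _ hρ
  have hsv := hcurve _ hs
  have hφ : HasDerivAt (fun τ => ((m τ x, ρ τ x, s τ x) : (Fin n → ℝ) × ℝ × ℝ))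
      ((fun i => deriv (fun τ => m τ x i) t, deriv (fun τ => ρ τ x) t,
        deriv (fun τ => s τ x) t)) t :=
    hmv.prodMk (hρv.prodMk hsv)
  have hHF : HasFDerivAt (fun p : (Fin n → ℝ) × ℝ × ℝ => H p.1 p.2.1 p.2.2)
      (fderiv ℝ (fun p : (Fin n → ℝ) × ℝ × ℝ => H p.1 p.2.1 p.2.2) (m t x, ρ t x, s t x))
      (m t x, ρ t x, s t x) :=
    (hH.differentiable two_ne_zero _).hasFDerivAt
  have := hHF.comp_hasDerivAt t hφ
  rw [clm_decomp] at this
  exact this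
end T
section Interior
variable {n : ℕ} {H : (Fin n → ℝ) → ℝ → ℝ → ℝ}
  {m : ℝ → (Fin n → ℝ) → (Fin n → ℝ)} {ρ s : ℝ → (Fin n → ℝ) → ℝ}

theorem interior_identity
    (hH : ContDiff ℝ 2 (fun p : (Fin n → ℝ) × ℝ × ℝ => H p.1 p.2.1 p.2.2))
    (hm : ∀ i, ContDiff ℝ 1 (fun p : ℝ × (Fin n → ℝ) => m p.1 p.2 i))
    (hρ : ContDiff ℝ 1 (fun p : ℝ × (Fin n → ℝ) => ρ p.1 p.2))
    (hs : ContDiff ℝ 1 (fun p : ℝ × (Fin n → ℝ) => s p.1 p.2))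
    (t : ℝ) (x : Fin n → ℝ) (bb : Fin n → ℝ) (tr ts : ℝ)
    (hmomx : ∀ i, deriv (fun τ => m τ x i) t
        + (∑ c, Dhm H (m t x) (ρ t x) (s t x) c * pd c (fun y => m t y i) x)
        + (∑ c, m t x c * pd i (fun y => Dhm H (m t y) (ρ t y) (s t y) c) x)
        + m t x i * (∑ c, pd c (fun y => Dhm H (m t y) (ρ t y) (s t y) c) x)
        + ρ t x * pd i (fun y => Dhρ H (m t y) (ρ t y) (s t y)) x
        + s t x * pd i (fun y => Dhs H (m t y) (ρ t y) (s t y)) x = bb i)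
    (hmassx : deriv (fun τ => ρ τ x) t
        + ∑ c, pd c (fun y => ρ t y * Dhm H (m t y) (ρ t y) (s t y) c) x = tr)
    (hentx : deriv (fun τ => s τ x) t
        + ∑ c, pd c (fun y => s t y * Dhm H (m t y) (ρ t y) (s t y) c) x = ts) :
    (∑ i, deriv (fun τ => m τ x i) t * Dhm H (m t x) (ρ t x) (s t x) i)
        + deriv (fun τ => ρ τ x) t * Dhρ H (m t x) (ρ t x) (s t x)
        + deriv (fun τ => s τ x) t * Dhs H (m t x) (ρ t x) (s t x)
      = ((∑ i, bb i * Dhm H (m t x) (ρ t x) (s t x) i)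
          + tr * Dhρ H (m t x) (ρ t x) (s t x) + ts * Dhs H (m t x) (ρ t x) (s t x))
        - ∑ c, pd c (fun y =>
            ((∑ i, m t y i * Dhm H (m t y) (ρ t y) (s t y) i)
              + ρ t y * Dhρ H (m t y) (ρ t y) (s t y)
              + s t y * Dhs H (m t y) (ρ t y) (s t y))
            * Dhm H (m t y) (ρ t y) (s t y) c) x := by
  -- spatial C¹ facts at time t
  have cm : ∀ i, ContDiff ℝ 1 (fun y => m t y i) :=
    fun i => (hm i).comp (contDiff_const.prodMk contDiff_id)
  have cmv : ContDiff ℝ 1 (fun y => m t y) := contDiff_pi.mpr cm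
  have cρ : ContDiff ℝ 1 (fun y => ρ t y) := hρ.comp (contDiff_const.prodMk contDiff_id)
  have cs : ContDiff ℝ 1 (fun y => s t y) := hs.comp (contDiff_const.prodMk contDiff_id)
  have cDM : ∀ j, ContDiff ℝ 1 (fun y => Dhm H (m t y) (ρ t y) (s t y) j) :=
    fun j => contDiff_Dhm_comp hH cmv cρ cs j
  have cDR : ContDiff ℝ 1 (fun y => Dhρ H (m t y) (ρ t y) (s t y)) :=
    contDiff_Dhρ_comp hH cmv cρ cs
  have cDS : ContDiff ℝ 1 (fun y => Dhs H (m t y) (ρ t y) (s t y)) :=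
    contDiff_Dhs_comp hH cmv cρ cs
  have dm : ∀ i, DifferentiableAt ℝ (fun y => m t y i) x :=
    fun i => (cm i).differentiable one_ne_zero x
  have dρ : DifferentiableAt ℝ (fun y => ρ t y) x := cρ.differentiable one_ne_zero x
  have ds : DifferentiableAt ℝ (fun y => s t y) x := cs.differentiable one_ne_zero x
  have dDM : ∀ j, DifferentiableAt ℝ (fun y => Dhm H (m t y) (ρ t y) (s t y) j) x :=
    fun j => (cDM j).differentiable one_ne_zero x
  have dDR : DifferentiableAt ℝ (fun y => Dhρ H (m t y) (ρ t y) (s t y)) x :=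
    cDR.differentiable one_ne_zero x
  have dDS : DifferentiableAt ℝ (fun y => Dhs H (m t y) (ρ t y) (s t y)) x :=
    cDS.differentiable one_ne_zero x
  have dsum : DifferentiableAt ℝ
      (fun y => ∑ i, m t y i * Dhm H (m t y) (ρ t y) (s t y) i) x := by
    apply DifferentiableAt.fun_sum
    exact fun i _ => (dm i).mul (dDM i)
  have dg : DifferentiableAt ℝ (fun y =>
      (∑ i, m t y i * Dhm H (m t y) (ρ t y) (s t y) i)
        + ρ t y * Dhρ H (m t y) (ρ t y) (s t y)
        + s t y * Dhs H (m t y) (ρ t y) (s t y)) x :=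
    (dsum.add (dρ.mul dDR)).add (ds.mul dDS)
  -- substituted time derivatives
  have hdm : ∀ i, deriv (fun τ => m τ x i) t
      = bb i - (∑ c, Dhm H (m t x) (ρ t x) (s t x) c * pd c (fun y => m t y i) x)
        - (∑ c, m t x c * pd i (fun y => Dhm H (m t y) (ρ t y) (s t y) c) x)
        - m t x i * (∑ c, pd c (fun y => Dhm H (m t y) (ρ t y) (s t y) c) x)
        - ρ t x * pd i (fun y => Dhρ H (m t y) (ρ t y) (s t y)) x
        - s t x * pd i (fun y => Dhs H (m t y) (ρ t y) (s t y)) x := by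
    intro i; have h := hmomx i; linarith
  have hdr : deriv (fun τ => ρ τ x) t
      = tr - ∑ c, (pd c (fun y => ρ t y) x * Dhm H (m t x) (ρ t x) (s t x) c
          + ρ t x * pd c (fun y => Dhm H (m t y) (ρ t y) (s t y) c) x) := by
    have h := hmassx
    have e : ∀ c ∈ Finset.univ, pd c (fun y => ρ t y * Dhm H (m t y) (ρ t y) (s t y) c) x
        = pd c (fun y => ρ t y) x * Dhm H (m t x) (ρ t x) (s t x) c
          + ρ t x * pd c (fun y => Dhm H (m t y) (ρ t y) (s t y) c) x :=
      fun c _ => pd_mul dρ (dDM c) c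
    rw [Finset.sum_congr rfl e] at h
    linarith
  have hds : deriv (fun τ => s τ x) t
      = ts - ∑ c, (pd c (fun y => s t y) x * Dhm H (m t x) (ρ t x) (s t x) c
          + s t x * pd c (fun y => Dhm H (m t y) (ρ t y) (s t y) c) x) := by
    have h := hentx
    have e : ∀ c ∈ Finset.univ, pd c (fun y => s t y * Dhm H (m t y) (ρ t y) (s t y) c) x
        = pd c (fun y => s t y) x * Dhm H (m t x) (ρ t x) (s t x) c
          + s t x * pd c (fun y => Dhm H (m t y) (ρ t y) (s t y) c) x :=
      fun c _ => pd_mul ds (dDM c) c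
    rw [Finset.sum_congr rfl e] at h
    linarith
  -- divergence expansion
  have hpdg : ∀ c, pd c (fun y =>
      (∑ i, m t y i * Dhm H (m t y) (ρ t y) (s t y) i)
        + ρ t y * Dhρ H (m t y) (ρ t y) (s t y)
        + s t y * Dhs H (m t y) (ρ t y) (s t y)) x
      = (∑ i, (pd c (fun y => m t y i) x * Dhm H (m t x) (ρ t x) (s t x) i
          + m t x i * pd c (fun y => Dhm H (m t y) (ρ t y) (s t y) i) x))
        + (pd c (fun y => ρ t y) x * Dhρ H (m t x) (ρ t x) (s t x)
          + ρ t x * pd c (fun y => Dhρ H (m t y) (ρ t y) (s t y)) x)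
        + (pd c (fun y => s t y) x * Dhs H (m t x) (ρ t x) (s t x)
          + s t x * pd c (fun y => Dhs H (m t y) (ρ t y) (s t y)) x) := by
    intro c
    have e1 : pd c (fun y =>
        ((∑ i, m t y i * Dhm H (m t y) (ρ t y) (s t y) i)
          + ρ t y * Dhρ H (m t y) (ρ t y) (s t y))
          + s t y * Dhs H (m t y) (ρ t y) (s t y)) x
        = pd c (fun y => (∑ i, m t y i * Dhm H (m t y) (ρ t y) (s t y) i)
            + ρ t y * Dhρ H (m t y) (ρ t y) (s t y)) x
          + pd c (fun y => s t y * Dhs H (m t y) (ρ t y) (s t y)) x :=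
      pd_add (dsum.add (dρ.mul dDR)) (ds.mul dDS) c
    have e2 : pd c (fun y => (∑ i, m t y i * Dhm H (m t y) (ρ t y) (s t y) i)
          + ρ t y * Dhρ H (m t y) (ρ t y) (s t y)) x
        = pd c (fun y => ∑ i, m t y i * Dhm H (m t y) (ρ t y) (s t y) i) x
          + pd c (fun y => ρ t y * Dhρ H (m t y) (ρ t y) (s t y)) x :=
      pd_add dsum (dρ.mul dDR) c
    have e3 : pd c (fun y => ∑ i, m t y i * Dhm H (m t y) (ρ t y) (s t y) i) x
        = ∑ i, pd c (fun y => m t y i * Dhm H (m t y) (ρ t y) (s t y) i) x :=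
      pd_sum (fun i => (dm i).mul (dDM i)) c
    have e4 : ∀ i ∈ Finset.univ,
        pd c (fun y => m t y i * Dhm H (m t y) (ρ t y) (s t y) i) x
        = pd c (fun y => m t y i) x * Dhm H (m t x) (ρ t x) (s t x) i
          + m t x i * pd c (fun y => Dhm H (m t y) (ρ t y) (s t y) i) x :=
      fun i _ => pd_mul (dm i) (dDM i) c
    have e5 : pd c (fun y => ρ t y * Dhρ H (m t y) (ρ t y) (s t y)) x
        = pd c (fun y => ρ t y) x * Dhρ H (m t x) (ρ t x) (s t x)
          + ρ t x * pd c (fun y => Dhρ H (m t y) (ρ t y) (s t y)) x :=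
      pd_mul dρ dDR c
    have e6 : pd c (fun y => s t y * Dhs H (m t y) (ρ t y) (s t y)) x
        = pd c (fun y => s t y) x * Dhs H (m t x) (ρ t x) (s t x)
          + s t x * pd c (fun y => Dhs H (m t y) (ρ t y) (s t y)) x :=
      pd_mul ds dDS c
    rw [e1, e2, e3, Finset.sum_congr rfl e4, e5, e6]
  have hdivF : (∑ c, pd c (fun y =>
      ((∑ i, m t y i * Dhm H (m t y) (ρ t y) (s t y) i)
        + ρ t y * Dhρ H (m t y) (ρ t y) (s t y)
        + s t y * Dhs H (m t y) (ρ t y) (s t y))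
      * Dhm H (m t y) (ρ t y) (s t y) c) x)
      = (∑ c, ((∑ i, (pd c (fun y => m t y i) x * Dhm H (m t x) (ρ t x) (s t x) i
            + m t x i * pd c (fun y => Dhm H (m t y) (ρ t y) (s t y) i) x))
          + (pd c (fun y => ρ t y) x * Dhρ H (m t x) (ρ t x) (s t x)
            + ρ t x * pd c (fun y => Dhρ H (m t y) (ρ t y) (s t y)) x)
          + (pd c (fun y => s t y) x * Dhs H (m t x) (ρ t x) (s t x)
            + s t x * pd c (fun y => Dhs H (m t y) (ρ t y) (s t y)) x))
          * Dhm H (m t x) (ρ t x) (s t x) c)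
        + ((∑ i, m t x i * Dhm H (m t x) (ρ t x) (s t x) i)
            + ρ t x * Dhρ H (m t x) (ρ t x) (s t x)
            + s t x * Dhs H (m t x) (ρ t x) (s t x))
          * (∑ c, pd c (fun y => Dhm H (m t y) (ρ t y) (s t y) c) x) := by
    have e : ∀ c ∈ Finset.univ, pd c (fun y =>
        ((∑ i, m t y i * Dhm H (m t y) (ρ t y) (s t y) i)
          + ρ t y * Dhρ H (m t y) (ρ t y) (s t y)
          + s t y * Dhs H (m t y) (ρ t y) (s t y))
        * Dhm H (m t y) (ρ t y) (s t y) c) x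
        = pd c (fun y => (∑ i, m t y i * Dhm H (m t y) (ρ t y) (s t y) i)
            + ρ t y * Dhρ H (m t y) (ρ t y) (s t y)
            + s t y * Dhs H (m t y) (ρ t y) (s t y)) x
            * Dhm H (m t x) (ρ t x) (s t x) c
          + ((∑ i, m t x i * Dhm H (m t x) (ρ t x) (s t x) i)
              + ρ t x * Dhρ H (m t x) (ρ t x) (s t x)
              + s t x * Dhs H (m t x) (ρ t x) (s t x))
            * pd c (fun y => Dhm H (m t y) (ρ t y) (s t y) c) x :=
      fun c _ => pd_mul dg (dDM c) c
    rw [Finset.sum_congr rfl e]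
    rw [Finset.sum_add_distrib, ← Finset.mul_sum]
    congr 1
    exact Finset.sum_congr rfl fun c _ => by rw [hpdg c]
  -- assemble via key_id
  have key := key_id (fun i => m t x i) (fun i => Dhm H (m t x) (ρ t x) (s t x) i) bb
    (fun c => pd c (fun y => ρ t y) x)
    (fun c => pd c (fun y => Dhρ H (m t y) (ρ t y) (s t y)) x)
    (fun c => pd c (fun y => s t y) x)
    (fun c => pd c (fun y => Dhs H (m t y) (ρ t y) (s t y)) x)
    (fun c i => pd c (fun y => m t y i) x)
    (fun c j => pd c (fun y => Dhm H (m t y) (ρ t y) (s t y) j) x)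
    (ρ t x) (s t x) (Dhρ H (m t x) (ρ t x) (s t x)) (Dhs H (m t x) (ρ t x) (s t x)) tr ts
  rw [hdr, hds, Finset.sum_congr rfl (fun i (_ : i ∈ Finset.univ) => by rw [hdm i])]
  linear_combination key + hdivF

end Interior
section DUI
open Metric in
theorem deriv_under_integral {n : ℕ} {f : ℝ × (Fin n → ℝ) → ℝ} (hf : ContDiff ℝ 1 f)
    (Ω : Set (Fin n → ℝ)) (hΩm : MeasurableSet Ω) (hΩc : IsCompact (closure Ω)) (t : ℝ) :
    HasDerivAt (fun τ => ∫ x in Ω, f (τ, x))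
      (∫ x in Ω, fderiv ℝ f (t, x) ((1 : ℝ), (0 : Fin n → ℝ))) t := by
  have hfin : volume Ω < ⊤ :=
    lt_of_le_of_lt (measure_mono subset_closure) hΩc.measure_lt_top
  have hΦd : ∀ (τ : ℝ) (x : Fin n → ℝ),
      HasDerivAt (fun τ' => f (τ', x)) (fderiv ℝ f (τ, x) ((1 : ℝ), (0 : Fin n → ℝ))) τ := by
    intro τ x
    have hcurve : HasDerivAt (fun τ' : ℝ => ((τ', x) : ℝ × (Fin n → ℝ)))
        (((1 : ℝ), (0 : Fin n → ℝ))) τ := (hasDerivAt_id τ).prodMk (hasDerivAt_const τ x)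
    exact ((hf.differentiable one_ne_zero (τ, x)).hasFDerivAt).comp_hasDerivAt τ hcurve
  have hΦc : Continuous (fun p : ℝ × (Fin n → ℝ) =>
      fderiv ℝ f p ((1 : ℝ), (0 : Fin n → ℝ))) :=
    (hf.continuous_fderiv one_ne_zero).clm_apply continuous_const
  have hK : IsCompact ((Set.Icc (t - 1) (t + 1)) ×ˢ closure Ω) :=
    isCompact_Icc.prod hΩc
  obtain ⟨C, hC⟩ := hK.exists_bound_of_continuousOn hΦc.continuousOn
  have hmain := hasDerivAt_integral_of_dominated_loc_of_deriv_le
    (F := fun τ x => f (τ, x))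
    (F' := fun τ x => fderiv ℝ f (τ, x) ((1 : ℝ), (0 : Fin n → ℝ)))
    (μ := volume.restrict Ω) (x₀ := t) (bound := fun _ => C) (s := Metric.ball t 1) (Metric.ball_mem_nhds t one_pos)
    ?_ ?_ ?_ ?_ ?_ ?_
  · exact hmain.2
  · exact Filter.Eventually.of_forall fun τ =>
      ((hf.continuous.comp (Continuous.prodMk_right τ)).aestronglyMeasurable)
  · exact (((hf.continuous.comp (Continuous.prodMk_right t)).continuousOn.integrableOn_compact
      hΩc).mono_set subset_closure)
  · exact (hΦc.comp (Continuous.prodMk_right t)).aestronglyMeasurable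
  · filter_upwards [ae_restrict_mem hΩm] with x hx
    intro τ hτ
    apply hC (τ, x)
    constructor
    · have := mem_ball_iff_norm.mp hτ
      have : |τ - t| ≤ 1 := le_of_lt (by simpa using this)
      constructor <;> [linarith [abs_le.mp this]; linarith [(abs_le.mp this).2]]
    · exact subset_closure hx
  · rw [integrable_const_iff]
    right
    exact ⟨by simpa using hfin⟩
  · filter_upwards with x
    intro τ hτ
    exact hΦd τ x
end DUI
section Main
variable {n : ℕ} {H : (Fin n → ℝ) → ℝ → ℝ → ℝ}
  {m : ℝ → (Fin n → ℝ) → (Fin n → ℝ)} {ρ s : ℝ → (Fin n → ℝ) → ℝ}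

theorem time_deriv_val
    (hH : ContDiff ℝ 2 (fun p : (Fin n → ℝ) × ℝ × ℝ => H p.1 p.2.1 p.2.2))
    (hm : ∀ i, ContDiff ℝ 1 (fun p : ℝ × (Fin n → ℝ) => m p.1 p.2 i))
    (hρ : ContDiff ℝ 1 (fun p : ℝ × (Fin n → ℝ) => ρ p.1 p.2))
    (hs : ContDiff ℝ 1 (fun p : ℝ × (Fin n → ℝ) => s p.1 p.2))
    (t : ℝ) (x : Fin n → ℝ) :
    fderiv ℝ (fun p : ℝ × (Fin n → ℝ) => H (m p.1 p.2) (ρ p.1 p.2) (s p.1 p.2)) (t, x)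
        ((1 : ℝ), (0 : Fin n → ℝ))
      = (∑ i, deriv (fun τ => m τ x i) t * Dhm H (m t x) (ρ t x) (s t x) i)
        + deriv (fun τ => ρ τ x) t * Dhρ H (m t x) (ρ t x) (s t x)
        + deriv (fun τ => s τ x) t * Dhs H (m t x) (ρ t x) (s t x) := by
  have h1 := hasDerivAt_H_time hH hm hρ hs t x
  rw [← Dhρ_eq hH, ← Dhs_eq hH] at h1
  simp_rw [← Dhm_eq hH] at h1
  have hG : ContDiff ℝ 1 (fun p : ℝ × (Fin n → ℝ) => H (m p.1 p.2) (ρ p.1 p.2) (s p.1 p.2)) :=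
    (hH.of_le one_le_two).comp ((contDiff_pi.mpr hm).prodMk (hρ.prodMk hs))
  have hcurve : HasDerivAt (fun τ' : ℝ => ((τ', x) : ℝ × (Fin n → ℝ)))
      (((1 : ℝ), (0 : Fin n → ℝ))) t := (hasDerivAt_id t).prodMk (hasDerivAt_const t x)
  have h2 := ((hG.differentiable one_ne_zero (t, x)).hasFDerivAt).comp_hasDerivAt t hcurve
  exact h2.unique h1

end Main

/-- Energy (Hamiltonian) balance for the open Lie-Poisson system: if
`∂_t m + £_{∂𝔥/∂m} m + ρ∇(∂𝔥/∂ρ) + s∇(∂𝔥/∂s) = b`, `∂_t ρ + div(ρ ∂𝔥/∂m) = θ_ρ`,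
`∂_t s + div(s ∂𝔥/∂m) = θ_s` in `Ω`, with boundary conditions
`((∂𝔥/∂m)·n) m = −J`, `ρ(∂𝔥/∂m)·n = −j_ρ`, `s(∂𝔥/∂m)·n = −j_s` on `∂Ω`, then
`d/dt ∫_Ω 𝔥 dx = ∫_Ω (b·∂𝔥/∂m + θ_ρ ∂𝔥/∂ρ + θ_s ∂𝔥/∂s) dx
  + ∫_{∂Ω} (J·∂𝔥/∂m + j_ρ ∂𝔥/∂ρ + j_s ∂𝔥/∂s) da`. -/
theorem open_lie_poisson_energy_balance {n : ℕ}
    (Ω : Set (Fin n → ℝ)) (hΩo : IsOpen Ω) (hΩm : MeasurableSet Ω)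
    (hΩc : IsCompact (closure Ω))
    (σ : Measure (Fin n → ℝ)) (nv : (Fin n → ℝ) → (Fin n → ℝ))
    (H : (Fin n → ℝ) → ℝ → ℝ → ℝ)
    (hH : ContDiff ℝ 2 (fun p : (Fin n → ℝ) × ℝ × ℝ => H p.1 p.2.1 p.2.2))
    (m b J : ℝ → (Fin n → ℝ) → (Fin n → ℝ))
    (ρ s θρ θs jρ js : ℝ → (Fin n → ℝ) → ℝ)
    (hm : ∀ i, ContDiff ℝ 1 (fun p : ℝ × (Fin n → ℝ) => m p.1 p.2 i))
    (hρ : ContDiff ℝ 1 (fun p : ℝ × (Fin n → ℝ) => ρ p.1 p.2))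
    (hs : ContDiff ℝ 1 (fun p : ℝ × (Fin n → ℝ) => s p.1 p.2))
    (hb : ∀ i, Continuous (fun p : ℝ × (Fin n → ℝ) => b p.1 p.2 i))
    (hθρ : Continuous (fun p : ℝ × (Fin n → ℝ) => θρ p.1 p.2))
    (hθs : Continuous (fun p : ℝ × (Fin n → ℝ) => θs p.1 p.2))
    (hdivthm : ∀ F : (Fin n → ℝ) → (Fin n → ℝ), ContDiff ℝ 1 F →
      ∫ x in Ω, ∑ i, pd i (fun y => F y i) x
        = ∫ x in frontier Ω, ∑ i, nv x i * F x i ∂σ)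
    (hmom : ∀ t, ∀ x ∈ Ω, ∀ i,
      deriv (fun τ => m τ x i) t
        + (∑ c, Dhm H (m t x) (ρ t x) (s t x) c * pd c (fun y => m t y i) x)
        + (∑ c, m t x c * pd i (fun y => Dhm H (m t y) (ρ t y) (s t y) c) x)
        + m t x i * (∑ c, pd c (fun y => Dhm H (m t y) (ρ t y) (s t y) c) x)
        + ρ t x * pd i (fun y => Dhρ H (m t y) (ρ t y) (s t y)) x
        + s t x * pd i (fun y => Dhs H (m t y) (ρ t y) (s t y)) x
      = b t x i)
    (hmass : ∀ t, ∀ x ∈ Ω,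
      deriv (fun τ => ρ τ x) t
        + ∑ c, pd c (fun y => ρ t y * Dhm H (m t y) (ρ t y) (s t y) c) x = θρ t x)
    (hent : ∀ t, ∀ x ∈ Ω,
      deriv (fun τ => s τ x) t
        + ∑ c, pd c (fun y => s t y * Dhm H (m t y) (ρ t y) (s t y) c) x = θs t x)
    (hbcJ : ∀ t, ∀ x ∈ frontier Ω, ∀ i,
      (∑ c, Dhm H (m t x) (ρ t x) (s t x) c * nv x c) * m t x i = -J t x i)
    (hbcρ : ∀ t, ∀ x ∈ frontier Ω,
      ρ t x * (∑ c, Dhm H (m t x) (ρ t x) (s t x) c * nv x c) = -jρ t x)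
    (hbcs : ∀ t, ∀ x ∈ frontier Ω,
      s t x * (∑ c, Dhm H (m t x) (ρ t x) (s t x) c * nv x c) = -js t x) :
    ∀ t, HasDerivAt (fun τ => ∫ x in Ω, H (m τ x) (ρ τ x) (s τ x))
      ((∫ x in Ω,
          (∑ i, b t x i * Dhm H (m t x) (ρ t x) (s t x) i)
            + θρ t x * Dhρ H (m t x) (ρ t x) (s t x)
            + θs t x * Dhs H (m t x) (ρ t x) (s t x))
        + ∫ x in frontier Ω,
            (∑ i, J t x i * Dhm H (m t x) (ρ t x) (s t x) i)
              + jρ t x * Dhρ H (m t x) (ρ t x) (s t x)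
              + js t x * Dhs H (m t x) (ρ t x) (s t x) ∂σ) t := by
  intro t
  -- spatial smoothness at time t
  have cm : ∀ i, ContDiff ℝ 1 (fun y => m t y i) :=
    fun i => (hm i).comp (contDiff_const.prodMk contDiff_id)
  have cmv : ContDiff ℝ 1 (fun y => m t y) := contDiff_pi.mpr cm
  have cρ : ContDiff ℝ 1 (fun y => ρ t y) := hρ.comp (contDiff_const.prodMk contDiff_id)
  have cs : ContDiff ℝ 1 (fun y => s t y) := hs.comp (contDiff_const.prodMk contDiff_id)
  have cDM : ∀ j, ContDiff ℝ 1 (fun y => Dhm H (m t y) (ρ t y) (s t y) j) :=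
    fun j => contDiff_Dhm_comp hH cmv cρ cs j
  have cDR : ContDiff ℝ 1 (fun y => Dhρ H (m t y) (ρ t y) (s t y)) :=
    contDiff_Dhρ_comp hH cmv cρ cs
  have cDS : ContDiff ℝ 1 (fun y => Dhs H (m t y) (ρ t y) (s t y)) :=
    contDiff_Dhs_comp hH cmv cρ cs
  have cg : ContDiff ℝ 1 (fun y =>
      (∑ i, m t y i * Dhm H (m t y) (ρ t y) (s t y) i)
        + ρ t y * Dhρ H (m t y) (ρ t y) (s t y)
        + s t y * Dhs H (m t y) (ρ t y) (s t y)) :=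
    ((ContDiff.sum fun i _ => (cm i).mul (cDM i)).add (cρ.mul cDR)).add (cs.mul cDS)
  have cFc : ∀ c, ContDiff ℝ 1 (fun y =>
      ((∑ i, m t y i * Dhm H (m t y) (ρ t y) (s t y) i)
        + ρ t y * Dhρ H (m t y) (ρ t y) (s t y)
        + s t y * Dhs H (m t y) (ρ t y) (s t y))
      * Dhm H (m t y) (ρ t y) (s t y) c) := fun c => cg.mul (cDM c)
  -- divergence theorem for the energy flux
  have hdiv := hdivthm (fun y c =>
      ((∑ i, m t y i * Dhm H (m t y) (ρ t y) (s t y) i)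
        + ρ t y * Dhρ H (m t y) (ρ t y) (s t y)
        + s t y * Dhs H (m t y) (ρ t y) (s t y))
      * Dhm H (m t y) (ρ t y) (s t y) c) (contDiff_pi.mpr cFc)
  -- derivative under the integral sign
  have hG : ContDiff ℝ 1 (fun p : ℝ × (Fin n → ℝ) => H (m p.1 p.2) (ρ p.1 p.2) (s p.1 p.2)) :=
    (hH.of_le one_le_two).comp ((contDiff_pi.mpr hm).prodMk (hρ.prodMk hs))
  have hDer := deriv_under_integral hG Ω hΩm hΩc t
  suffices hval :
      ∫ x in Ω, fderiv ℝ (fun p : ℝ × (Fin n → ℝ) => H (m p.1 p.2) (ρ p.1 p.2) (s p.1 p.2))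
          (t, x) ((1 : ℝ), (0 : Fin n → ℝ))
        = (∫ x in Ω,
            (∑ i, b t x i * Dhm H (m t x) (ρ t x) (s t x) i)
              + θρ t x * Dhρ H (m t x) (ρ t x) (s t x)
              + θs t x * Dhs H (m t x) (ρ t x) (s t x))
          + ∫ x in frontier Ω,
              (∑ i, J t x i * Dhm H (m t x) (ρ t x) (s t x) i)
                + jρ t x * Dhρ H (m t x) (ρ t x) (s t x)
                + js t x * Dhs H (m t x) (ρ t x) (s t x) ∂σ by
    exact hval ▸ hDer
  -- pointwise identity in the interior
  have hpt : ∀ x ∈ Ω,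
      fderiv ℝ (fun p : ℝ × (Fin n → ℝ) => H (m p.1 p.2) (ρ p.1 p.2) (s p.1 p.2))
          (t, x) ((1 : ℝ), (0 : Fin n → ℝ))
        = ((∑ i, b t x i * Dhm H (m t x) (ρ t x) (s t x) i)
            + θρ t x * Dhρ H (m t x) (ρ t x) (s t x)
            + θs t x * Dhs H (m t x) (ρ t x) (s t x))
          - ∑ c, pd c (fun y =>
              ((∑ i, m t y i * Dhm H (m t y) (ρ t y) (s t y) i)
                + ρ t y * Dhρ H (m t y) (ρ t y) (s t y)
                + s t y * Dhs H (m t y) (ρ t y) (s t y))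
              * Dhm H (m t y) (ρ t y) (s t y) c) x := by
    intro x hx
    rw [time_deriv_val hH hm hρ hs t x]
    exact interior_identity hH hm hρ hs t x _ _ _ (hmom t x hx) (hmass t x hx) (hent t x hx)
  have h1 : ∫ x in Ω, fderiv ℝ
        (fun p : ℝ × (Fin n → ℝ) => H (m p.1 p.2) (ρ p.1 p.2) (s p.1 p.2))
        (t, x) ((1 : ℝ), (0 : Fin n → ℝ))
      = ∫ x in Ω,
          (((∑ i, b t x i * Dhm H (m t x) (ρ t x) (s t x) i)
            + θρ t x * Dhρ H (m t x) (ρ t x) (s t x)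
            + θs t x * Dhs H (m t x) (ρ t x) (s t x))
          - ∑ c, pd c (fun y =>
              ((∑ i, m t y i * Dhm H (m t y) (ρ t y) (s t y) i)
                + ρ t y * Dhρ H (m t y) (ρ t y) (s t y)
                + s t y * Dhs H (m t y) (ρ t y) (s t y))
              * Dhm H (m t y) (ρ t y) (s t y) c) x) :=
    setIntegral_congr_fun hΩm hpt
  -- integrability
  have hIΨ : IntegrableOn (fun x =>
      (∑ i, b t x i * Dhm H (m t x) (ρ t x) (s t x) i)
        + θρ t x * Dhρ H (m t x) (ρ t x) (s t x)
        + θs t x * Dhs H (m t x) (ρ t x) (s t x)) Ω volume := by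
    have hcont : Continuous (fun x =>
        (∑ i, b t x i * Dhm H (m t x) (ρ t x) (s t x) i)
          + θρ t x * Dhρ H (m t x) (ρ t x) (s t x)
          + θs t x * Dhs H (m t x) (ρ t x) (s t x)) := by
      refine Continuous.add (Continuous.add ?_ ?_) ?_
      · exact continuous_finset_sum _ fun i _ =>
          ((hb i).comp (Continuous.prodMk_right t)).mul ((cDM i).continuous)
      · exact (hθρ.comp (Continuous.prodMk_right t)).mul cDR.continuous
      · exact (hθs.comp (Continuous.prodMk_right t)).mul cDS.continuous
    exact (hcont.continuousOn.integrableOn_compact hΩc).mono_set subset_closure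
  have hIdiv : IntegrableOn (fun x =>
      ∑ c, pd c (fun y =>
          ((∑ i, m t y i * Dhm H (m t y) (ρ t y) (s t y) i)
            + ρ t y * Dhρ H (m t y) (ρ t y) (s t y)
            + s t y * Dhs H (m t y) (ρ t y) (s t y))
          * Dhm H (m t y) (ρ t y) (s t y) c) x) Ω volume := by
    have hcont : Continuous (fun x =>
        ∑ c, pd c (fun y =>
            ((∑ i, m t y i * Dhm H (m t y) (ρ t y) (s t y) i)
              + ρ t y * Dhρ H (m t y) (ρ t y) (s t y)
              + s t y * Dhs H (m t y) (ρ t y) (s t y))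
            * Dhm H (m t y) (ρ t y) (s t y) c) x) := by
      refine continuous_finset_sum _ fun c _ => ?_
      show Continuous fun x => fderiv ℝ _ x (Pi.single c 1)
      exact ((cFc c).continuous_fderiv one_ne_zero).clm_apply continuous_const
    exact (hcont.continuousOn.integrableOn_compact hΩc).mono_set subset_closure
  have h2 : ∫ x in Ω,
        (((∑ i, b t x i * Dhm H (m t x) (ρ t x) (s t x) i)
          + θρ t x * Dhρ H (m t x) (ρ t x) (s t x)
          + θs t x * Dhs H (m t x) (ρ t x) (s t x))
        - ∑ c, pd c (fun y =>
            ((∑ i, m t y i * Dhm H (m t y) (ρ t y) (s t y) i)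
              + ρ t y * Dhρ H (m t y) (ρ t y) (s t y)
              + s t y * Dhs H (m t y) (ρ t y) (s t y))
            * Dhm H (m t y) (ρ t y) (s t y) c) x)
      = (∫ x in Ω,
          (∑ i, b t x i * Dhm H (m t x) (ρ t x) (s t x) i)
            + θρ t x * Dhρ H (m t x) (ρ t x) (s t x)
            + θs t x * Dhs H (m t x) (ρ t x) (s t x))
        - ∫ x in Ω, ∑ c, pd c (fun y =>
            ((∑ i, m t y i * Dhm H (m t y) (ρ t y) (s t y) i)
              + ρ t y * Dhρ H (m t y) (ρ t y) (s t y)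
              + s t y * Dhs H (m t y) (ρ t y) (s t y))
            * Dhm H (m t y) (ρ t y) (s t y) c) x :=
    integral_sub hIΨ hIdiv
  -- boundary rewriting
  have hbdry : ∀ x ∈ frontier Ω,
      (∑ c, nv x c *
        (((∑ i, m t x i * Dhm H (m t x) (ρ t x) (s t x) i)
          + ρ t x * Dhρ H (m t x) (ρ t x) (s t x)
          + s t x * Dhs H (m t x) (ρ t x) (s t x))
        * Dhm H (m t x) (ρ t x) (s t x) c))
      = -((∑ i, J t x i * Dhm H (m t x) (ρ t x) (s t x) i)
          + jρ t x * Dhρ H (m t x) (ρ t x) (s t x)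
          + js t x * Dhs H (m t x) (ρ t x) (s t x)) := by
    intro x hx
    have e0 : (∑ c, nv x c *
        (((∑ i, m t x i * Dhm H (m t x) (ρ t x) (s t x) i)
          + ρ t x * Dhρ H (m t x) (ρ t x) (s t x)
          + s t x * Dhs H (m t x) (ρ t x) (s t x))
        * Dhm H (m t x) (ρ t x) (s t x) c))
        = ((∑ i, m t x i * Dhm H (m t x) (ρ t x) (s t x) i)
          + ρ t x * Dhρ H (m t x) (ρ t x) (s t x)
          + s t x * Dhs H (m t x) (ρ t x) (s t x))
          * (∑ c, Dhm H (m t x) (ρ t x) (s t x) c * nv x c) := by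
      rw [Finset.mul_sum]
      exact Finset.sum_congr rfl fun c _ => by ring
    rw [e0, add_mul, add_mul, Finset.sum_mul]
    have eJ : ∀ i ∈ Finset.univ,
        m t x i * Dhm H (m t x) (ρ t x) (s t x) i
          * (∑ c, Dhm H (m t x) (ρ t x) (s t x) c * nv x c)
        = -J t x i * Dhm H (m t x) (ρ t x) (s t x) i := fun i _ => by
      rw [show m t x i * Dhm H (m t x) (ρ t x) (s t x) i
            * (∑ c, Dhm H (m t x) (ρ t x) (s t x) c * nv x c)
          = (∑ c, Dhm H (m t x) (ρ t x) (s t x) c * nv x c) * m t x i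
            * Dhm H (m t x) (ρ t x) (s t x) i from by ring]
      rw [hbcJ t x hx i]
    rw [Finset.sum_congr rfl eJ,
      show ρ t x * Dhρ H (m t x) (ρ t x) (s t x)
          * (∑ c, Dhm H (m t x) (ρ t x) (s t x) c * nv x c)
        = (ρ t x * (∑ c, Dhm H (m t x) (ρ t x) (s t x) c * nv x c))
          * Dhρ H (m t x) (ρ t x) (s t x) from by ring,
      hbcρ t x hx,
      show s t x * Dhs H (m t x) (ρ t x) (s t x)
          * (∑ c, Dhm H (m t x) (ρ t x) (s t x) c * nv x c)
        = (s t x * (∑ c, Dhm H (m t x) (ρ t x) (s t x) c * nv x c))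
          * Dhs H (m t x) (ρ t x) (s t x) from by ring,
      hbcs t x hx]
    ring_nf
    rw [Finset.sum_neg_distrib]
    ring
  have h3 : ∫ x in frontier Ω,
        (∑ c, nv x c *
          (((∑ i, m t x i * Dhm H (m t x) (ρ t x) (s t x) i)
            + ρ t x * Dhρ H (m t x) (ρ t x) (s t x)
            + s t x * Dhs H (m t x) (ρ t x) (s t x))
          * Dhm H (m t x) (ρ t x) (s t x) c)) ∂σ
      = -∫ x in frontier Ω,
          ((∑ i, J t x i * Dhm H (m t x) (ρ t x) (s t x) i)
            + jρ t x * Dhρ H (m t x) (ρ t x) (s t x)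
            + js t x * Dhs H (m t x) (ρ t x) (s t x)) ∂σ := by
    rw [setIntegral_congr_fun isClosed_frontier.measurableSet hbdry, integral_neg]
  rw [h1, h2, hdiv, h3]
  ring
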